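/- Let H be the strong product P₄ ⊠ P₂. Then Υ(H) = 2, but Υ(H ∨ H) ≤ 3 < Υ(H) + Υ(H), showing the inequality Υ(G ∨ J) ≤ Υ(G) + Υ(J) can be strict. -/

import Mathlib

open SimpleGraph

/-- The join of two graphs on disjoint vertex sets. -/
def SimpleGraph.join {V W : Type*} (G : SimpleGraph V) (J : SimpleGraph W) :
    SimpleGraph (V ⊕ W) where
  Adj x y :=
    match x, y with
    | Sum.inl a, Sum.inl b => G.Adj a b
    | Sum.inr a, Sum.inr b => J.Adj a b
    | Sum.inl _, Sum.inr _ => True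
    | Sum.inr _, Sum.inl _ => True
  symm := ⟨by
    rintro (a | a) (b | b) h
    · exact G.adj_symm h
    · trivial
    · trivial
    · exact J.adj_symm h⟩
  loopless := ⟨by
    rintro (a | a) h
    · exact G.ne_of_adj h rfl
    · exact J.ne_of_adj h rfl⟩

/-- The common neighbourhood of a set of vertices. -/
def SimpleGraph.commonNbhd {V : Type*} (G : SimpleGraph V) (S : Set V) : Set V :=
  {x | ∀ v ∈ S, G.Adj v x}

/-- A small common neighbourhood set. -/
def SimpleGraph.IsSCN {V : Type*} (G : SimpleGraph V) (S : Set V) : Prop :=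
  S.Nonempty ∧ (G.commonNbhd S).ncard ≤ S.ncard

/-- `Υ(G)`: the minimum cardinality of a small common neighbourhood set. -/
noncomputable def SimpleGraph.upsilon {V : Type*} (G : SimpleGraph V) : ℕ :=
  sInf {n | ∃ S : Set V, G.IsSCN S ∧ S.ncard = n}

/-- The strong product of two simple graphs. -/
def SimpleGraph.strongProd {α β : Type*} (G : SimpleGraph α) (H : SimpleGraph β) :
    SimpleGraph (α × β) where
  Adj x y := x ≠ y ∧ (x.1 = y.1 ∨ G.Adj x.1 y.1) ∧ (x.2 = y.2 ∨ H.Adj x.2 y.2)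
  symm := ⟨by
    rintro x y ⟨h1, h2, h3⟩
    exact ⟨h1.symm, h2.imp Eq.symm (fun h => h.symm), h3.imp Eq.symm (fun h => h.symm)⟩⟩
  loopless := ⟨fun x h => h.1 rfl⟩


instance {n : ℕ} : DecidableRel (pathGraph n).Adj := fun _ _ =>
  decidable_of_iff _ pathGraph_adj.symm

instance {α β : Type*} (G : SimpleGraph α) (H : SimpleGraph β) [DecidableRel G.Adj]
    [DecidableRel H.Adj] [DecidableEq α] [DecidableEq β] :
    DecidableRel (G.strongProd H).Adj := fun x y =>
  decidable_of_iff (x ≠ y ∧ (x.1 = y.1 ∨ G.Adj x.1 y.1) ∧ (x.2 = y.2 ∨ H.Adj x.2 y.2)) Iff.rfl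

abbrev HH : SimpleGraph (Fin 4 × Fin 2) := (pathGraph 4).strongProd (pathGraph 2)

lemma HH_common_empty : (HH).commonNbhd {((0 : Fin 4), (0 : Fin 2)), ((3 : Fin 4), (0 : Fin 2))} = ∅ := by
  ext x
  simp only [SimpleGraph.commonNbhd, Set.mem_setOf_eq, Set.mem_insert_iff,
    Set.mem_singleton_iff, Set.mem_empty_iff_false, iff_false]
  intro h
  have h1 := h _ (Or.inl rfl)
  have h2 := h _ (Or.inr rfl)
  revert h1 h2
  revert x
  decide

lemma HH_mem2 : ∃ S : Set (Fin 4 × Fin 2), (HH).IsSCN S ∧ S.ncard = 2 := by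
  refine ⟨{((0 : Fin 4), (0 : Fin 2)), ((3 : Fin 4), (0 : Fin 2))}, ⟨⟨_, Or.inl rfl⟩, ?_⟩, ?_⟩
  · rw [HH_common_empty]
    simp
  · exact Set.ncard_pair (by decide)

lemma HH_lb : ∀ n ∈ {n | ∃ S : Set (Fin 4 × Fin 2), (HH).IsSCN S ∧ S.ncard = n}, 2 ≤ n := by
  rintro n ⟨S, ⟨hne, hle⟩, hcard⟩
  by_contra hlt
  push_neg at hlt
  interval_cases n
  · rw [Set.ncard_eq_zero S.toFinite] at hcard
    exact hne.ne_empty hcard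
  · obtain ⟨v, rfl⟩ := Set.ncard_eq_one.mp hcard
    rw [hcard] at hle
    have h2 : 1 < ((HH).commonNbhd {v}).ncard := by
      rw [Set.one_lt_ncard_iff ((HH).commonNbhd {v}).toFinite]
      have key : ∀ w : Fin 4 × Fin 2, ∃ a b : Fin 4 × Fin 2,
          ((HH).Adj w a ∧ (HH).Adj w b) ∧ a ≠ b := by decide
      have := key v
      obtain ⟨a, b, ⟨ha, hb⟩, hab⟩ := this
      exact ⟨a, b, fun w hw => hw ▸ ha, fun w hw => hw ▸ hb, hab⟩
    omega

lemma HH_upsilon : (HH).upsilon = 2 := by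
  unfold SimpleGraph.upsilon
  refine le_antisymm (Nat.sInf_le ?_) (le_csInf ⟨2, ?_⟩ HH_lb)
  · exact HH_mem2
  · exact HH_mem2

lemma join_upsilon_le : ((HH).join (HH)).upsilon ≤ 3 := by
  set S : Set (Fin 4 × Fin 2 ⊕ Fin 4 × Fin 2) :=
    {Sum.inl ((0 : Fin 4), (0 : Fin 2)), Sum.inl ((3 : Fin 4), (0 : Fin 2)),
      Sum.inr ((0 : Fin 4), (0 : Fin 2))} with hS
  have hsub : ((HH).join (HH)).commonNbhd S ⊆
      {Sum.inr (((0 : Fin 4), (1 : Fin 2))), Sum.inr (((1 : Fin 4), (0 : Fin 2))),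
        Sum.inr (((1 : Fin 4), (1 : Fin 2)))} := by
    rintro (y | y) hx
    · have h1 : (HH).Adj ((0 : Fin 4), (0 : Fin 2)) y :=
        hx _ (Or.inl rfl)
      have h2 : (HH).Adj ((3 : Fin 4), (0 : Fin 2)) y :=
        hx _ (Or.inr (Or.inl rfl))
      exfalso
      clear hx
      revert h1 h2; revert y; decide
    · have h3 : (HH).Adj ((0 : Fin 4), (0 : Fin 2)) y :=
        hx _ (Or.inr (Or.inr rfl))
      have : y = ((0 : Fin 4), (1 : Fin 2)) ∨ y = ((1 : Fin 4), (0 : Fin 2)) ∨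
          y = ((1 : Fin 4), (1 : Fin 2)) := by
        clear hx
        revert h3; revert y; decide
      simpa using this
  have hcard : S.ncard = 3 := by
    rw [hS, Set.ncard_insert_of_notMem (by simp <;> decide), Set.ncard_insert_of_notMem (by simp <;> decide),
      Set.ncard_singleton]
  have hle : (((HH).join (HH)).commonNbhd S).ncard ≤ 3 := by
    refine (Set.ncard_le_ncard hsub (Set.toFinite _)).trans ?_
    refine (Set.ncard_insert_le _ _).trans ?_
    have := Set.ncard_insert_le (Sum.inr (((1 : Fin 4), (0 : Fin 2))) :
      Fin 4 × Fin 2 ⊕ Fin 4 × Fin 2) {Sum.inr (((1 : Fin 4), (1 : Fin 2)))}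
    simp only [Set.ncard_singleton] at this ⊢
    omega
  refine Nat.sInf_le ⟨S, ⟨⟨_, Or.inl rfl⟩, hcard ▸ hle⟩, hcard⟩

theorem stmt19 :
    ((pathGraph 4).strongProd (pathGraph 2)).upsilon = 2 ∧
    (((pathGraph 4).strongProd (pathGraph 2)).join
        ((pathGraph 4).strongProd (pathGraph 2))).upsilon ≤ 3 ∧
    3 < ((pathGraph 4).strongProd (pathGraph 2)).upsilon +
        ((pathGraph 4).strongProd (pathGraph 2)).upsilon := by
  refine ⟨HH_upsilon, join_upsilon_le, ?_⟩
  rw [HH_upsilon]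
  norm_num
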